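/- Let p be prime, e a divisor of p-1, and n an integer with p ∤ n. Then (φ(e)/e) · Σ_{d ∣ e} (μ(d)/φ(d)) · Σ_{χ of order d mod p} χ(n) equals 1 if n is e-free modulo p, and 0 otherwise. -/

import Mathlib

open Finset ArithmeticFunction
open scoped ArithmeticFunction.zeta


noncomputable def auxg (o : ℕ) : ArithmeticFunction ℚ :=
  ⟨fun k => if o.Coprime k then (moebius k : ℚ) / k else 0, by simp⟩

lemma auxg_apply (o k : ℕ) : auxg o k = if o.Coprime k then (moebius k : ℚ) / k else 0 := rfl

lemma auxg_mult (o : ℕ) : (auxg o).IsMultiplicative := by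
  constructor
  · simp [auxg_apply, Nat.coprime_one_right]
  · intro m n hmn
    by_cases hm : o.Coprime m
    · by_cases hn : o.Coprime n
      · have hco : o.Coprime (m * n) := Nat.Coprime.mul_right hm hn
        simp only [auxg_apply, if_pos hco, if_pos hm, if_pos hn,
          isMultiplicative_moebius.map_mul_of_coprime hmn]
        push_cast
        by_cases hm0 : (m : ℚ) = 0
        · simp [hm0]
        by_cases hn0 : (n : ℚ) = 0
        · simp [hn0]
        field_simp
      · have : ¬ o.Coprime (m * n) := fun h => hn (Nat.Coprime.coprime_dvd_right (dvd_mul_left n m) h)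
        simp [auxg_apply, if_neg this, if_neg hn]
    · have : ¬ o.Coprime (m * n) := fun h => hm (Nat.Coprime.coprime_dvd_right (dvd_mul_right m n) h)
      simp [auxg_apply, if_neg this, if_neg hm]

lemma auxg_sum (o e' : ℕ) (he' : e' ≠ 0) :
    ∑ k ∈ e'.divisors, auxg o k
      = ∏ q ∈ e'.primeFactors, (if q ∣ o then 1 else 1 - (q : ℚ)⁻¹) := by
  have hmul : ((auxg o) * ζ).IsMultiplicative := (auxg_mult o).mul isMultiplicative_zeta.natCast
  have h1 : ∑ k ∈ e'.divisors, auxg o k = ((auxg o) * ζ) e' := by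
    rw [coe_mul_zeta_apply]
  rw [h1, hmul.multiplicative_factorization _ he',
    Nat.prod_factorization_eq_prod_primeFactors]
  refine Finset.prod_congr rfl fun q hq => ?_
  have hqp : q.Prime := Nat.prime_of_mem_primeFactors hq
  have ht : e'.factorization q ≠ 0 := by
    have := (Nat.mem_primeFactors.mp hq).2.1
    simpa [Nat.Prime.factorization_pos_of_dvd hqp he' this] using
      (Nat.Prime.factorization_pos_of_dvd hqp he' this).ne'
  set t := e'.factorization q with hts
  rw [coe_mul_zeta_apply, Nat.sum_divisors_prime_pow hqp]
  have hsub : Finset.range 2 ⊆ Finset.range (t + 1) := by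
    apply Finset.range_subset_range.mpr
    omega
  rw [← Finset.sum_subset hsub (fun i hi hni => ?_)]
  · -- sum over range 2
    rw [Finset.sum_range_succ, Finset.sum_range_one, pow_zero, pow_one]
    have h1' : auxg o 1 = 1 := (auxg_mult o).1
    rw [h1', auxg_apply, moebius_apply_prime hqp]
    by_cases hqo : q ∣ o
    · have : ¬ o.Coprime q := by
        rw [Nat.coprime_comm]
        exact fun h => (hqp.coprime_iff_not_dvd.mp h) hqo
      rw [if_neg this, if_pos hqo, add_zero]
    · have : o.Coprime q := by
        rw [Nat.coprime_comm]
        exact hqp.coprime_iff_not_dvd.mpr hqo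
      rw [if_pos this, if_neg hqo]
      push_cast
      ring
  · -- terms with i ≥ 2 vanish
    have hi2 : 2 ≤ i := by
      simp only [Finset.mem_range] at hi hni
      omega
    have : moebius (q ^ i) = 0 := by
      rw [moebius_apply_prime_pow hqp (by omega)]
      simp [show i ≠ 1 by omega]
    simp [auxg_apply, this]

lemma P1Q (e o : ℕ) (he : e ≠ 0) (ho : o ∣ e) :
    ((Nat.totient e : ℚ) / e) * ((moebius o : ℚ) / (Nat.totient o))
      = ∑ d ∈ e.divisors.filter (fun d => o ∣ d), (moebius d : ℚ) / d := by
  have ho0 : o ≠ 0 := fun h => he (by simpa [h] using ho)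
  have he' : e / o ≠ 0 := by
    have := Nat.div_pos (Nat.le_of_dvd (Nat.pos_of_ne_zero he) ho) (Nat.pos_of_ne_zero ho0)
    omega
  have heq : o * (e / o) = e := Nat.mul_div_cancel' ho
  have hre : ∑ d ∈ e.divisors.filter (fun d => o ∣ d), (moebius d : ℚ) / d
      = ∑ k ∈ (e / o).divisors, (moebius (o * k) : ℚ) / (o * k) := by
    refine Finset.sum_nbij' (fun d => d / o) (fun k => o * k) ?_ ?_ ?_ ?_ ?_
    · intro d hd
      simp only [mem_filter, Nat.mem_divisors] at hd
      obtain ⟨⟨hde, -⟩, t, rfl⟩ := hd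
      rw [Nat.mul_div_cancel_left t (Nat.pos_of_ne_zero ho0)]
      refine Nat.mem_divisors.mpr ⟨?_, he'⟩
      have : o * t ∣ o * (e / o) := by rw [heq]; exact hde
      exact (mul_dvd_mul_iff_left ho0).mp this
    · intro k hk
      simp only [Nat.mem_divisors] at hk
      refine mem_filter.mpr ⟨Nat.mem_divisors.mpr ⟨?_, he⟩, dvd_mul_right o k⟩
      calc o * k ∣ o * (e / o) := mul_dvd_mul_left o hk.1
        _ = e := heq
    · intro d hd
      simp only [mem_filter] at hd
      exact Nat.mul_div_cancel' hd.2
    · intro k _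
      exact Nat.mul_div_cancel_left k (Nat.pos_of_ne_zero ho0)
    · intro d hd
      simp only [mem_filter] at hd
      rw [← Nat.cast_mul, Nat.mul_div_cancel' hd.2]
  have hterm : ∑ k ∈ (e / o).divisors, (moebius (o * k) : ℚ) / (o * k)
      = (moebius o : ℚ) / o * ∑ k ∈ (e / o).divisors, auxg o k := by
    rw [Finset.mul_sum]
    refine Finset.sum_congr rfl fun k hk => ?_
    have hk0 : k ≠ 0 := (Nat.pos_of_mem_divisors hk).ne'
    by_cases hc : o.Coprime k
    · rw [auxg_apply, if_pos hc, isMultiplicative_moebius.map_mul_of_coprime hc]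
      push_cast
      have h1 : (o : ℚ) ≠ 0 := Nat.cast_ne_zero.mpr ho0
      have h2 : (k : ℚ) ≠ 0 := Nat.cast_ne_zero.mpr hk0
      field_simp
    · rw [auxg_apply, if_neg hc, mul_zero]
      have hsf : ¬ Squarefree (o * k) := by
        intro hsf
        set g := Nat.gcd o k with hg
        have hg1 : g ≠ 1 := hc
        have hg0 : g ≠ 0 := Nat.gcd_ne_zero_left ho0
        have hqp : (Nat.minFac g).Prime := Nat.minFac_prime hg1
        have hq2 : Nat.minFac g * Nat.minFac g ∣ o * k :=
          mul_dvd_mul ((Nat.minFac_dvd g).trans (Nat.gcd_dvd_left o k))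
            ((Nat.minFac_dvd g).trans (Nat.gcd_dvd_right o k))
        exact hqp.not_isUnit (hsf _ hq2)
      rw [moebius_eq_zero_of_not_squarefree hsf]
      simp
  rw [hre, hterm, auxg_sum o (e/o) he']
  -- now the pure product algebra
  by_cases hsfo : Squarefree o
  · have hPe := Nat.totient_eq_mul_prod_factors e
    have hPo := Nat.totient_eq_mul_prod_factors o
    have hpf : e.primeFactors = o.primeFactors ∪ (e / o).primeFactors := by
      conv_lhs => rw [← heq]
      exact Nat.primeFactors_mul ho0 he'
    have hite : ∏ q ∈ (e / o).primeFactors, (if q ∣ o then 1 else 1 - (q : ℚ)⁻¹)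
        = ∏ q ∈ (e / o).primeFactors \ o.primeFactors, (1 - (q : ℚ)⁻¹) := by
      rw [Finset.sdiff_eq_filter, Finset.prod_filter]
      refine Finset.prod_congr rfl fun q hq => ?_
      have hqp : q.Prime := Nat.prime_of_mem_primeFactors hq
      by_cases hqo : q ∣ o
      · rw [if_pos hqo, if_neg (by simp [Nat.mem_primeFactors, hqp, hqo, ho0])]
      · rw [if_neg hqo, if_pos (fun hmem => hqo (Nat.mem_primeFactors.mp hmem).2.1)]
    have hprodsplit : ∏ q ∈ e.primeFactors, (1 - (q : ℚ)⁻¹)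
        = (∏ q ∈ o.primeFactors, (1 - (q : ℚ)⁻¹))
          * ∏ q ∈ (e / o).primeFactors \ o.primeFactors, (1 - (q : ℚ)⁻¹) := by
      rw [hpf, ← Finset.union_sdiff_self_eq_union, Finset.prod_union Finset.disjoint_sdiff]
    have hne : ∀ q ∈ o.primeFactors, (1 - (q : ℚ)⁻¹) ≠ 0 := by
      intro q hq
      have hqp : q.Prime := Nat.prime_of_mem_primeFactors hq
      have : (q : ℚ) ≠ 0 := Nat.cast_ne_zero.mpr hqp.pos.ne'
      have h2 : (q : ℚ) ≠ 1 := by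
        exact_mod_cast fun h => hqp.one_lt.ne' (Nat.cast_injective h)
      intro h
      apply h2
      field_simp at h
      linarith [h]
    have hPone : (∏ q ∈ o.primeFactors, (1 - (q : ℚ)⁻¹)) ≠ 0 := Finset.prod_ne_zero_iff.mpr hne
    have heQ : (e : ℚ) ≠ 0 := Nat.cast_ne_zero.mpr he
    have hoQ : (o : ℚ) ≠ 0 := Nat.cast_ne_zero.mpr ho0
    have hphio : (Nat.totient o : ℚ) ≠ 0 :=
      Nat.cast_ne_zero.mpr (Nat.totient_pos.mpr (Nat.pos_of_ne_zero ho0)).ne'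
    rw [hite, hPe, hPo, hprodsplit]
    set P : ℚ := ∏ q ∈ o.primeFactors, (1 - (q : ℚ)⁻¹) with hPdef
    set Q : ℚ := ∏ q ∈ (e / o).primeFactors \ o.primeFactors, (1 - (q : ℚ)⁻¹) with hQdef
    field_simp
  · rw [moebius_eq_zero_of_not_squarefree hsfo]
    simp


open scoped Classical in
lemma prim_root (p : ℕ) [Fact p.Prime] (d : ℕ) (hd : d ≠ 0) (hdvd : d ∣ p - 1) :
    ∃ z : ZMod p, IsPrimitiveRoot z d := by
  obtain ⟨g, hg⟩ := IsCyclic.exists_generator (α := (ZMod p)ˣ)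
  have hord : orderOf g = p - 1 := by
    rw [orderOf_eq_card_of_forall_mem_zpowers hg, Nat.card_eq_fintype_card, ZMod.card_units p]
  have hN : p - 1 ≠ 0 := by
    have := (Fact.out : p.Prime).one_lt
    omega
  have h1 : orderOf (g ^ ((p-1)/d)) = d := by
    rw [orderOf_pow, hord, Nat.gcd_eq_right (Nat.div_dvd_of_dvd hdvd), Nat.div_div_self hdvd hN]
  refine ⟨((g ^ ((p-1)/d) : (ZMod p)ˣ) : ZMod p), ?_⟩
  have := IsPrimitiveRoot.orderOf (((g ^ ((p-1)/d) : (ZMod p)ˣ) : ZMod p))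
  rwa [orderOf_units, h1] at this

open scoped Classical in
lemma key_count (p : ℕ) [Fact p.Prime] (d : ℕ) (hd : d ≠ 0) (b : ZMod p) (hb : b ≠ 0) :
    ∑ χ ∈ univ.filter (fun χ : DirichletCharacter ℂ p => χ ^ d = 1), χ b⁻¹
      = (#(univ.filter fun y : ZMod p => y ^ d = b) : ℂ) := by
  have hphi : (p.totient : ℂ) ≠ 0 :=
    Nat.cast_ne_zero.mpr (Nat.totient_pos.mpr (Fact.out : p.Prime).pos).ne'
  have main : ∀ x : ZMod p, ∑ χ : DirichletCharacter ℂ p, χ (x * b⁻¹)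
      = if x = b then (p.totient : ℂ) else 0 := by
    intro x
    rw [DirichletCharacter.sum_characters_eq]
    simp only [mul_inv_eq_one₀ hb]
  have inner : ∀ χ : DirichletCharacter ℂ p, ∑ y : ZMod p, χ (y ^ d * b⁻¹)
      = (if χ ^ d = 1 then (p.totient : ℂ) else 0) * χ b⁻¹ := by
    intro χ
    have hterm : ∀ y : ZMod p, χ (y ^ d * b⁻¹) = (χ ^ d) y * χ b⁻¹ := fun y => by
      rw [map_mul, map_pow, ← MulChar.pow_apply' χ hd]
    rw [Finset.sum_congr rfl (fun y _ => hterm y), ← Finset.sum_mul]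
    congr 1
    by_cases h1 : χ ^ d = 1
    · rw [if_pos h1, h1]
      have := MulChar.sum_one_eq_card_units (R := ZMod p) (R' := ℂ)
      rw [this, ZMod.card_units_eq_totient]
    · rw [if_neg h1]
      exact MulChar.sum_eq_zero_of_ne_one h1
  have lhs1 : ∑ y : ZMod p, ∑ χ : DirichletCharacter ℂ p, χ (y ^ d * b⁻¹)
      = (p.totient : ℂ) * (#(univ.filter fun y : ZMod p => y ^ d = b) : ℂ) := by
    rw [Finset.sum_congr rfl (fun y _ => main (y ^ d)), ← Finset.sum_filter,
      Finset.sum_const, nsmul_eq_mul, mul_comm]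
  have rhs1 : ∑ y : ZMod p, ∑ χ : DirichletCharacter ℂ p, χ (y ^ d * b⁻¹)
      = (p.totient : ℂ) * ∑ χ ∈ univ.filter (fun χ : DirichletCharacter ℂ p => χ ^ d = 1), χ b⁻¹ := by
    rw [Finset.sum_comm]
    rw [Finset.sum_congr rfl (fun χ _ => inner χ)]
    simp only [ite_mul, zero_mul]
    rw [← Finset.sum_filter, Finset.mul_sum]
  apply mul_left_cancel₀ hphi
  rw [← lhs1, rhs1]

open scoped Classical in
lemma count_pow (p : ℕ) [Fact p.Prime] (d : ℕ) (hd : d ≠ 0) (hdvd : d ∣ p - 1)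
    (b : ZMod p) (hb : b ≠ 0) :
    (#(univ.filter fun y : ZMod p => y ^ d = b) : ℂ)
      = if ∃ y : ZMod p, y ^ d = b then (d : ℂ) else 0 := by
  obtain ⟨z, hz⟩ := prim_root p d hd hdvd
  have hcard := hz.card_nthRoots b
  have hnodup := hz.nthRoots_nodup hb
  have hset : univ.filter (fun y : ZMod p => y ^ d = b) = (Polynomial.nthRoots d b).toFinset := by
    ext y
    simp [Polynomial.mem_nthRoots (Nat.pos_of_ne_zero hd), Multiset.mem_toFinset]
  rw [hset, Multiset.toFinset_card_of_nodup hnodup, hcard]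
  split_ifs <;> simp

open scoped Classical in
lemma char_orthog (p : ℕ) [Fact p.Prime] (d : ℕ) (hd : d ≠ 0) (hdvd : d ∣ p - 1)
    (b : ZMod p) (hb : b ≠ 0) :
    ∑ χ ∈ univ.filter (fun χ : DirichletCharacter ℂ p => χ ^ d = 1), χ b
      = (d : ℂ) * (if ∃ y : ZMod p, y ^ d = b then 1 else 0) := by
  have hb' : b⁻¹ ≠ 0 := inv_ne_zero hb
  have h := key_count p d hd b⁻¹ hb'
  rw [inv_inv] at h
  rw [h, count_pow p d hd hdvd b⁻¹ hb']
  have hiff : (∃ y : ZMod p, y ^ d = b⁻¹) ↔ (∃ y : ZMod p, y ^ d = b) := by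
    constructor
    · rintro ⟨y, hy⟩
      exact ⟨y⁻¹, by rw [inv_pow, hy, inv_inv]⟩
    · rintro ⟨y, hy⟩
      exact ⟨y⁻¹, by rw [inv_pow, hy]⟩
  rw [if_congr hiff rfl rfl]
  split_ifs <;> ring


lemma res_iff (p : ℕ) [Fact p.Prime] (d : ℕ) (hdvd : d ∣ p - 1) (u : (ZMod p)ˣ) :
    (∃ Y : (ZMod p)ˣ, Y ^ d = u) ↔ d ∣ (p - 1) / orderOf u := by
  have hN : p - 1 ≠ 0 := by
    have := (Fact.out : p.Prime).one_lt
    omega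
  constructor
  · rintro ⟨Y, rfl⟩
    have h1 : (Y ^ d) ^ ((p - 1) / d) = 1 := by
      rw [← pow_mul, Nat.mul_div_cancel' hdvd, ← ZMod.card_units p, pow_card_eq_one]
    have hr : orderOf (Y ^ d) ∣ (p - 1) / d := orderOf_dvd_of_pow_eq_one h1
    obtain ⟨s, hs⟩ := hr
    have hr0 : 0 < orderOf (Y ^ d) := orderOf_pos _
    refine ⟨s, ?_⟩
    have hNeq : p - 1 = orderOf (Y ^ d) * (d * s) := by
      rw [← Nat.mul_div_cancel' hdvd, hs]
      ring
    rw [hNeq, Nat.mul_div_cancel_left _ hr0]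
  · intro h
    obtain ⟨g, hg⟩ := IsCyclic.exists_generator (α := (ZMod p)ˣ)
    have hord : orderOf g = p - 1 := by
      rw [orderOf_eq_card_of_forall_mem_zpowers hg, Nat.card_eq_fintype_card, ZMod.card_units p]
    obtain ⟨s, hs⟩ := (mem_powers_iff_mem_zpowers).mpr (hg u)
    dsimp only at hs
    have hou : orderOf u = (p - 1) / Nat.gcd (p - 1) s := by
      rw [← hs, orderOf_pow, hord]
    have hgcd : (p - 1) / orderOf u = Nat.gcd (p - 1) s := by
      rw [hou, Nat.div_div_self (Nat.gcd_dvd_left _ _) hN]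
    have hds : d ∣ s := (hgcd ▸ h).trans (Nat.gcd_dvd_right _ _)
    obtain ⟨t, rfl⟩ := hds
    exact ⟨g ^ t, by rw [← pow_mul, mul_comm t d, hs]⟩

lemma zmod_res_iff (p : ℕ) [Fact p.Prime] (d : ℕ) (hd : d ≠ 0) (hdvd : d ∣ p - 1)
    (b : ZMod p) (hb : b ≠ 0) (u : (ZMod p)ˣ) (hu : (u : ZMod p) = b) :
    (∃ y : ZMod p, y ^ d = b) ↔ d ∣ (p - 1) / orderOf u := by
  rw [← res_iff p d hdvd u]
  constructor
  · rintro ⟨y, hy⟩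
    have hy0 : y ≠ 0 := by
      intro h0
      exact hb (by rw [← hy, h0, zero_pow hd])
    refine ⟨Units.mk0 y hy0, Units.ext ?_⟩
    rw [Units.val_pow_eq_pow_val, Units.val_mk0, hu, hy]
  · rintro ⟨Y, hY⟩
    exact ⟨(Y : ZMod p), by rw [← Units.val_pow_eq_pow_val, hY, hu]⟩


lemma P1C (e o : ℕ) (he : e ≠ 0) (ho : o ∣ e) :
    ((Nat.totient e : ℂ) / e) * ((moebius o : ℂ) / (Nat.totient o))
      = ∑ d ∈ e.divisors.filter (fun d => o ∣ d), (moebius d : ℂ) / d := by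
  have h := congrArg (fun q : ℚ => (q : ℂ)) (P1Q e o he ho)
  push_cast at h
  exact h

open scoped Classical in
theorem stmt_6 (p : ℕ) [Fact p.Prime] (e : ℕ) (he : e ∣ p - 1) (n : ℤ)
    (hn : ¬ (p : ℤ) ∣ n) :
    ((Nat.totient e : ℂ) / (e : ℂ)) *
      ∑ d ∈ e.divisors, ((ArithmeticFunction.moebius d : ℂ) / (Nat.totient d : ℂ)) *
        ∑ χ ∈ univ.filter (fun χ : DirichletCharacter ℂ p => orderOf χ = d), χ (n : ZMod p)
      = if (∀ d, d ∣ e → 1 < d → ¬ ∃ y : ZMod p, y ^ d = (n : ZMod p)) then 1 else 0 := by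
  have hp : p.Prime := Fact.out
  have hN0 : p - 1 ≠ 0 := by have := hp.one_lt; omega
  have he0 : e ≠ 0 := by
    rintro rfl
    exact hN0 (zero_dvd_iff.mp he)
  set a : ZMod p := (n : ZMod p) with ha_def
  have ha : a ≠ 0 := fun h => hn ((ZMod.intCast_zmod_eq_zero_iff_dvd n p).mp h)
  set u : (ZMod p)ˣ := Units.mk0 a ha with hu_def
  have hu : (u : ZMod p) = a := rfl
  set m : ℕ := Nat.gcd e ((p - 1) / orderOf u) with hm_def
  have hres : ∀ d, d ∣ e → d ≠ 0 → ((∃ y : ZMod p, y ^ d = a) ↔ d ∣ m) := by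
    intro d hde hd0
    rw [zmod_res_iff p d hd0 (hde.trans he) a ha u hu, hm_def, Nat.dvd_gcd_iff]
    exact ⟨fun h => ⟨hde, h⟩, And.right⟩
  have hm0 : m ≠ 0 := Nat.gcd_ne_zero_left he0
  have hme : m ∣ e := Nat.gcd_dvd_left _ _
  have hcond : (∀ d, d ∣ e → 1 < d → ¬ ∃ y : ZMod p, y ^ d = a) ↔ m = 1 := by
    constructor
    · intro H
      by_contra hm1
      have h1m : 1 < m := by omega
      exact H m hme h1m ((hres m hme hm0).mpr dvd_rfl)
    · intro hm1 d hde hd1 hex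
      have hd' := (hres d hde (by omega)).mp hex
      rw [hm1] at hd'
      have := Nat.le_of_dvd one_pos hd'
      omega
  calc
    ((Nat.totient e : ℂ) / (e : ℂ)) *
      ∑ d ∈ e.divisors, ((moebius d : ℂ) / (Nat.totient d : ℂ)) *
        ∑ χ ∈ univ.filter (fun χ : DirichletCharacter ℂ p => orderOf χ = d), χ a
      = ∑ d ∈ e.divisors, ∑ χ ∈ univ.filter (fun χ : DirichletCharacter ℂ p => orderOf χ = d),
          (((Nat.totient e : ℂ) / e) * ((moebius d : ℂ) / (Nat.totient d : ℂ))) * χ a := by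
        rw [Finset.mul_sum]
        refine Finset.sum_congr rfl fun d _ => ?_
        rw [← mul_assoc, Finset.mul_sum]
    _ = ∑ d ∈ e.divisors, ∑ χ ∈ univ.filter (fun χ : DirichletCharacter ℂ p => orderOf χ = d),
          (∑ d' ∈ e.divisors.filter (fun d' => orderOf χ ∣ d'), (moebius d' : ℂ) / d') * χ a := by
        refine Finset.sum_congr rfl fun d hd => Finset.sum_congr rfl fun χ hχ => ?_
        have hχd : orderOf χ = d := (Finset.mem_filter.mp hχ).2
        rw [hχd]
        congr 1
        exact P1C e d he0 (Nat.mem_divisors.mp hd).1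
    _ = ∑ χ ∈ univ.filter (fun χ : DirichletCharacter ℂ p => orderOf χ ∣ e),
          (∑ d' ∈ e.divisors.filter (fun d' => orderOf χ ∣ d'), (moebius d' : ℂ) / d') * χ a := by
        have hsets : ∀ d ∈ e.divisors,
            univ.filter (fun χ : DirichletCharacter ℂ p => orderOf χ = d)
              = (univ.filter (fun χ : DirichletCharacter ℂ p => orderOf χ ∣ e)).filter
                  (fun χ => orderOf χ = d) := by
          intro d hd
          rw [Finset.filter_filter]
          ext χ
          simp only [Finset.mem_filter, Finset.mem_univ, true_and]
          exact ⟨fun h => ⟨h ▸ (Nat.mem_divisors.mp hd).1, h⟩, And.right⟩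
        rw [Finset.sum_congr rfl fun d hd => by rw [hsets d hd]]
        exact Finset.sum_fiberwise_of_maps_to
          (fun χ hχ => Nat.mem_divisors.mpr ⟨(Finset.mem_filter.mp hχ).2, he0⟩) _
    _ = ∑ d' ∈ e.divisors, ((moebius d' : ℂ) / d') *
          ∑ χ ∈ univ.filter (fun χ : DirichletCharacter ℂ p => orderOf χ ∣ d'), χ a := by
        have step : ∀ χ ∈ univ.filter (fun χ : DirichletCharacter ℂ p => orderOf χ ∣ e),
            (∑ d' ∈ e.divisors.filter (fun d' => orderOf χ ∣ d'), (moebius d' : ℂ) / d') * χ a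
              = ∑ d' ∈ e.divisors,
                  (if orderOf χ ∣ d' then ((moebius d' : ℂ) / d') * χ a else 0) := by
          intro χ _
          rw [Finset.sum_filter, Finset.sum_mul]
          exact Finset.sum_congr rfl fun d' _ => by rw [ite_mul, zero_mul]
        rw [Finset.sum_congr rfl step, Finset.sum_comm]
        refine Finset.sum_congr rfl fun d' hd' => ?_
        have hd'e : d' ∣ e := (Nat.mem_divisors.mp hd').1
        rw [Finset.mul_sum, ← Finset.sum_filter, Finset.filter_filter]
        congr 1
        ext χ
        simp only [Finset.mem_filter, Finset.mem_univ, true_and]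
        exact ⟨And.right, fun h => ⟨h.trans hd'e, h⟩⟩
    _ = ∑ d' ∈ e.divisors, ((moebius d' : ℂ) / d') *
          ((d' : ℂ) * (if ∃ y : ZMod p, y ^ d' = a then 1 else 0)) := by
        refine Finset.sum_congr rfl fun d' hd' => ?_
        have hd'e : d' ∣ e := (Nat.mem_divisors.mp hd').1
        have hd0 : d' ≠ 0 := (Nat.pos_of_mem_divisors hd').ne'
        congr 1
        have hfil : univ.filter (fun χ : DirichletCharacter ℂ p => orderOf χ ∣ d')
            = univ.filter (fun χ : DirichletCharacter ℂ p => χ ^ d' = 1) := by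
          ext χ
          simp [orderOf_dvd_iff_pow_eq_one]
        rw [hfil]
        exact char_orthog p d' hd0 (hd'e.trans he) a ha
    _ = ∑ d' ∈ e.divisors, ((moebius d' : ℂ) * (if d' ∣ m then 1 else 0)) := by
        refine Finset.sum_congr rfl fun d' hd' => ?_
        have hd'e : d' ∣ e := (Nat.mem_divisors.mp hd').1
        have hd0 : d' ≠ 0 := (Nat.pos_of_mem_divisors hd').ne'
        have hcast : (d' : ℂ) ≠ 0 := Nat.cast_ne_zero.mpr hd0
        rw [if_congr (hres d' hd'e hd0) rfl rfl]
        field_simp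
    _ = ∑ d' ∈ m.divisors, (moebius d' : ℂ) := by
        rw [← Nat.divisors_filter_dvd_of_dvd he0 hme, Finset.sum_filter]
        refine Finset.sum_congr rfl fun d' _ => ?_
        split_ifs <;> simp
    _ = if m = 1 then 1 else 0 := by
        have h2 : ((moebius * ζ : ArithmeticFunction ℤ)) m = (1 : ArithmeticFunction ℤ) m := by
          rw [moebius_mul_coe_zeta]
        rw [coe_mul_zeta_apply, ArithmeticFunction.one_apply] at h2
        rw [show (∑ d' ∈ m.divisors, (moebius d' : ℂ))
            = ((∑ d' ∈ m.divisors, moebius d' : ℤ) : ℂ) by push_cast; rfl, h2]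
        split_ifs <;> simp
    _ = if (∀ d, d ∣ e → 1 < d → ¬ ∃ y : ZMod p, y ^ d = a) then 1 else 0 :=
        (if_congr hcond rfl rfl).symm
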